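/- Let U and V be finite sets, let ρ and σ be probability measures on U and V respectively, and let λ be a coupling of ρ and σ on U × V. Then there exists another coupling λ̃ of ρ and σ which is absolutely continuous with respect to λ and such that the number of elements v ∈ V that are not λ̃-committed is at most |U| − 1. -/

import Mathlib

open MeasureTheory
open scoped ENNReal

namespace Marriage

/-- `v` is `λ`-committed: there is at most one `u` such that `λ {(u, v)} > 0`. -/
def Committed {U V : Type*} [MeasurableSpace U] [MeasurableSpace V]
    (lam : Measure (U × V)) (v : V) : Prop :=
  {u : U | lam {(u, v)} ≠ 0}.Subsingleton

open Finset

lemma exists_kernel {U V : Type} [Fintype U] [Fintype V] [DecidableEq U] [DecidableEq V]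
    (hU : Nonempty U) (S : Finset (U × V))
    (hcard : Fintype.card U + (S.image Prod.snd).card ≤ S.card) :
    ∃ w : U × V → ℝ, w ≠ 0 ∧ (∀ x, w x ≠ 0 → x ∈ S) ∧
      (∀ u, ∑ v, w (u, v) = 0) ∧ (∀ v, ∑ u, w (u, v) = 0) := by
  classical
  set Vp : Finset V := S.image Prod.snd with hVpdef
  let Φ1 : ({x // x ∈ S} → ℝ) →ₗ[ℝ] (U → ℝ) :=
    LinearMap.pi fun u => ∑ s : {x // x ∈ S}, if (s : U × V).1 = u then LinearMap.proj s else 0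
  let Φ2 : ({x // x ∈ S} → ℝ) →ₗ[ℝ] ({v // v ∈ Vp} → ℝ) :=
    LinearMap.pi fun v => ∑ s : {x // x ∈ S},
      if (s : U × V).2 = (v : V) then LinearMap.proj s else 0
  let Φ : ({x // x ∈ S} → ℝ) →ₗ[ℝ] (U → ℝ) × ({v // v ∈ Vp} → ℝ) := Φ1.prod Φ2
  have hΦ1 : ∀ f u, (Φ f).1 u = ∑ s : {x // x ∈ S}, if (s : U × V).1 = u then f s else 0 := by
    intro f u
    simp only [Φ, Φ1, LinearMap.prod_apply, Function.prod, LinearMap.pi_apply,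
      LinearMap.coe_sum, Finset.sum_apply]
    exact Finset.sum_congr rfl fun s _ => by split <;> simp
  have hΦ2 : ∀ f (v : {v // v ∈ Vp}),
      (Φ f).2 v = ∑ s : {x // x ∈ S}, if (s : U × V).2 = (v : V) then f s else 0 := by
    intro f v
    simp only [Φ, Φ2, LinearMap.prod_apply, Function.prod, LinearMap.pi_apply,
      LinearMap.coe_sum, Finset.sum_apply]
    exact Finset.sum_congr rfl fun s _ => by split <;> simp
  let g : ((U → ℝ) × ({v // v ∈ Vp} → ℝ)) →ₗ[ℝ] ℝ :=
    ((∑ u : U, LinearMap.proj u).comp (LinearMap.fst ℝ _ _)) -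
      ((∑ v : {v // v ∈ Vp}, LinearMap.proj v).comp (LinearMap.snd ℝ _ _))
  have hg : ∀ ab : (U → ℝ) × ({v // v ∈ Vp} → ℝ),
      g ab = (∑ u, ab.1 u) - ∑ v, ab.2 v := by
    intro ab
    simp [g, LinearMap.sub_apply, LinearMap.coe_sum, Finset.sum_apply]
  have hgΦ : ∀ f, g (Φ f) = 0 := by
    intro f
    rw [hg]
    have h1 : (∑ u, (Φ f).1 u) = ∑ s : {x // x ∈ S}, f s := by
      simp only [hΦ1]
      rw [Finset.sum_comm]
      refine Finset.sum_congr rfl fun s _ => ?_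
      rw [Finset.sum_ite_eq univ (s : U × V).1 (fun _ => f s)]
      simp
    have h2 : (∑ v, (Φ f).2 v) = ∑ s : {x // x ∈ S}, f s := by
      simp only [hΦ2]
      rw [Finset.sum_comm]
      refine Finset.sum_congr rfl fun s _ => ?_
      rw [Finset.sum_coe_sort Vp (fun v => if (s : U × V).2 = v then f s else 0)]
      rw [Finset.sum_ite_eq Vp (s : U × V).2 (fun _ => f s)]
      have : (s : U × V).2 ∈ Vp := Finset.mem_image.2 ⟨s, s.2, rfl⟩
      simp [this]
    rw [h1, h2, sub_self]
  have hgne : g ≠ 0 := by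
    obtain ⟨u₀⟩ := hU
    intro h
    have h1 : g ((Pi.single u₀ (1:ℝ)), 0) = 0 := by rw [h]; rfl
    rw [hg] at h1
    simp [Finset.sum_pi_single'] at h1
  have hrange : LinearMap.range Φ ≤ LinearMap.ker g := by
    rintro x ⟨f, rfl⟩; exact hgΦ f
  have hkerg : Module.finrank ℝ (LinearMap.ker g) + 1 =
      Module.finrank ℝ ((U → ℝ) × ({v // v ∈ Vp} → ℝ)) :=
    Module.Dual.finrank_ker_add_one_of_ne_zero hgne
  have hW : Module.finrank ℝ ((U → ℝ) × ({v // v ∈ Vp} → ℝ)) =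
      Fintype.card U + Vp.card := by
    rw [Module.finrank_prod, Module.finrank_fintype_fun_eq_card,
      Module.finrank_fintype_fun_eq_card, Fintype.card_coe]
  have hdom : Module.finrank ℝ ({x // x ∈ S} → ℝ) = S.card := by
    rw [Module.finrank_fintype_fun_eq_card, Fintype.card_coe]
  have hrn := LinearMap.finrank_range_add_finrank_ker Φ
  have hle : Module.finrank ℝ (LinearMap.range Φ) ≤ Module.finrank ℝ (LinearMap.ker g) :=
    Submodule.finrank_mono hrange
  have hker : LinearMap.ker Φ ≠ ⊥ := by
    intro hbot
    rw [hbot, finrank_bot, add_zero, hdom] at hrn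
    omega
  obtain ⟨f, hfmem, hfne⟩ := Submodule.exists_mem_ne_zero_of_ne_bot hker
  have hΦf0 : Φ f = 0 := hfmem
  set w : U × V → ℝ := fun x => if h : x ∈ S then f ⟨x, h⟩ else 0 with hwdef
  have hw : ∀ x, w x = ∑ s : {x // x ∈ S}, if (s : U × V) = x then f s else 0 := by
    intro x
    by_cases h : x ∈ S
    · rw [hwdef]; simp only [dif_pos h]
      rw [Finset.sum_eq_single (⟨x, h⟩ : {x // x ∈ S})]
      · simp
      · intro s _ hs
        rw [if_neg]; intro he; exact hs (Subtype.ext he)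
      · intro h'; exact absurd (Finset.mem_univ _) h'
    · rw [hwdef]; simp only [dif_neg h]
      symm; apply Finset.sum_eq_zero
      intro s _
      rw [if_neg]; intro he; exact h (he ▸ s.2)
  refine ⟨w, ?_, ?_, ?_, ?_⟩
  · intro h0
    obtain ⟨s, hs⟩ := Function.ne_iff.1 hfne
    have h2 : w (s : U × V) = f s := by rw [hwdef]; simp [s.2]
    rw [h0] at h2; exact hs (by simpa using h2.symm)
  · intro x hx
    by_contra h
    rw [hwdef] at hx; simp [h] at hx
  · intro u
    simp only [hw]
    rw [Finset.sum_comm]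
    have key : ∀ s : {x // x ∈ S},
        (∑ v, if (s : U × V) = (u, v) then f s else 0)
          = if (s : U × V).1 = u then f s else 0 := by
      intro s
      by_cases h1 : (s : U × V).1 = u
      · rw [if_pos h1, Finset.sum_eq_single (s : U × V).2]
        · rw [if_pos]; exact Prod.ext h1 rfl
        · intro v _ hv
          rw [if_neg]; intro he; exact hv (congrArg Prod.snd he).symm
        · intro h'; exact absurd (Finset.mem_univ _) h'
      · rw [if_neg h1]
        apply Finset.sum_eq_zero
        intro v _
        rw [if_neg]; intro he; exact h1 (congrArg Prod.fst he)
    rw [Finset.sum_congr rfl fun s _ => key s]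
    have h0 : (Φ f).1 u = 0 := by rw [hΦf0]; rfl
    rw [hΦ1] at h0
    exact h0
  · intro v
    have hcol : (∑ u, w (u, v)) = ∑ s : {x // x ∈ S}, if (s : U × V).2 = v then f s else 0 := by
      simp only [hw]
      rw [Finset.sum_comm]
      refine Finset.sum_congr rfl fun s _ => ?_
      by_cases h2 : (s : U × V).2 = v
      · rw [if_pos h2, Finset.sum_eq_single (s : U × V).1]
        · rw [if_pos]; exact Prod.ext rfl h2
        · intro u _ hu
          rw [if_neg]; intro he; exact hu (congrArg Prod.fst he).symm
        · intro h'; exact absurd (Finset.mem_univ _) h'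
      · rw [if_neg h2]
        apply Finset.sum_eq_zero
        intro u _
        rw [if_neg]; intro he; exact h2 (congrArg Prod.snd he)
    rw [hcol]
    by_cases hv : v ∈ Vp
    · have h0 : (Φ f).2 ⟨v, hv⟩ = 0 := by rw [hΦf0]; rfl
      rw [hΦ2] at h0
      exact h0
    · apply Finset.sum_eq_zero
      intro s _
      rw [if_neg]
      intro he
      exact hv (he ▸ Finset.mem_image.2 ⟨s, s.2, rfl⟩)

lemma exists_min_support {U V : Type} [Fintype U] [Fintype V] [DecidableEq U] [DecidableEq V]
    (hU : Nonempty U) (p : U × V → ℝ) (hp : ∀ x, 0 ≤ p x) :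
    ∃ q : U × V → ℝ, (∀ x, 0 ≤ q x) ∧ (∀ x, q x ≠ 0 → p x ≠ 0) ∧
      (∀ u, ∑ v, q (u, v) = ∑ v, p (u, v)) ∧
      (∀ v, ∑ u, q (u, v) = ∑ u, p (u, v)) ∧
      (Finset.univ.filter fun x => q x ≠ 0).card + 1 ≤
        Fintype.card U + ((Finset.univ.filter fun x => q x ≠ 0).image Prod.snd).card := by
  classical
  suffices H : ∀ (n : ℕ) (p : U × V → ℝ), (∀ x, 0 ≤ p x) →
      (Finset.univ.filter fun x => p x ≠ 0).card = n →
      ∃ q : U × V → ℝ, (∀ x, 0 ≤ q x) ∧ (∀ x, q x ≠ 0 → p x ≠ 0) ∧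
        (∀ u, ∑ v, q (u, v) = ∑ v, p (u, v)) ∧
        (∀ v, ∑ u, q (u, v) = ∑ u, p (u, v)) ∧
        (Finset.univ.filter fun x => q x ≠ 0).card + 1 ≤
          Fintype.card U + ((Finset.univ.filter fun x => q x ≠ 0).image Prod.snd).card by
    exact H _ p hp rfl
  intro n
  induction n using Nat.strong_induction_on with
  | _ n ih =>
    intro p hp hn
    set S : Finset (U × V) := Finset.univ.filter fun x => p x ≠ 0 with hSdef
    by_cases hdone : S.card + 1 ≤ Fintype.card U + (S.image Prod.snd).card
    · exact ⟨p, hp, fun x hx => hx, fun _ => rfl, fun _ => rfl, hdone⟩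
    · have hcard : Fintype.card U + (S.image Prod.snd).card ≤ S.card := by omega
      obtain ⟨w, hwne, hwsupp, hwrow, hwcol⟩ := exists_kernel hU S hcard
      have hwS : ∀ x, w x ≠ 0 → p x ≠ 0 := by
        intro x hx
        have := hwsupp x hx
        rw [hSdef, Finset.mem_filter] at this
        exact this.2
      have htot : ∑ x : U × V, w x = 0 := by
        rw [Fintype.sum_prod_type]
        simp [hwrow]
      have hneg : ∃ x, w x < 0 := by
        by_contra h
        push_neg at h
        apply hwne
        funext x
        exact (Finset.sum_eq_zero_iff_of_nonneg fun x _ => h x).1 htot x (Finset.mem_univ x)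
      set N : Finset (U × V) := Finset.univ.filter fun x => w x < 0 with hNdef
      have hNne : N.Nonempty := by
        obtain ⟨x, hx⟩ := hneg
        exact ⟨x, by simp [hNdef, hx]⟩
      obtain ⟨x₀, hx₀N, hx₀min⟩ := Finset.exists_min_image N (fun x => p x / (-w x)) hNne
      have hx₀neg : w x₀ < 0 := by
        rw [hNdef, Finset.mem_filter] at hx₀N; exact hx₀N.2
      set t : ℝ := p x₀ / (-w x₀) with htdef
      have ht0 : 0 ≤ t := div_nonneg (hp x₀) (by linarith)
      set q₀ : U × V → ℝ := fun x => p x + t * w x with hq₀def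
      have hq₀nonneg : ∀ x, 0 ≤ q₀ x := by
        intro x
        rcases lt_or_ge (w x) 0 with hwx | hwx
        · have hxN : x ∈ N := by simp [hNdef, hwx]
          have hle : t ≤ p x / (-w x) := hx₀min x hxN
          rw [le_div_iff₀ (by linarith)] at hle
          rw [hq₀def]
          simp only
          nlinarith
        · rw [hq₀def]
          exact add_nonneg (hp x) (mul_nonneg ht0 hwx)
      have hq₀supp : ∀ x, q₀ x ≠ 0 → x ∈ S := by
        intro x hx
        by_cases hwx : w x = 0
        · rw [hSdef, Finset.mem_filter]
          refine ⟨Finset.mem_univ x, fun hpx => ?_⟩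
          exact hx (by rw [hq₀def]; simp [hpx, hwx])
        · exact hwsupp x hwx
      have hx₀S : x₀ ∈ S := hwsupp x₀ (ne_of_lt hx₀neg)
      have hx₀p : p x₀ ≠ 0 := by
        rw [hSdef, Finset.mem_filter] at hx₀S; exact hx₀S.2
      have hwx₀ : w x₀ ≠ 0 := ne_of_lt hx₀neg
      have htw : t * w x₀ = -p x₀ := by
        rw [htdef]
        field_simp
      have hq₀x₀ : q₀ x₀ = 0 := by
        rw [hq₀def]
        simp only
        rw [htw]
        ring
      have hsub : (Finset.univ.filter fun x => q₀ x ≠ 0) ⊆ S := fun x hx =>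
        hq₀supp x (Finset.mem_filter.1 hx).2
      have hlt : (Finset.univ.filter fun x => q₀ x ≠ 0).card < n := by
        rw [← hn]
        apply Finset.card_lt_card
        rw [Finset.ssubset_iff_of_subset hsub]
        exact ⟨x₀, hx₀S, by simp [hq₀x₀]⟩
      have hq₀row : ∀ u, ∑ v, q₀ (u, v) = ∑ v, p (u, v) := by
        intro u
        rw [hq₀def]
        simp only
        rw [Finset.sum_add_distrib, ← Finset.mul_sum, hwrow, mul_zero, add_zero]
      have hq₀col : ∀ v, ∑ u, q₀ (u, v) = ∑ u, p (u, v) := by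
        intro v
        rw [hq₀def]
        simp only
        rw [Finset.sum_add_distrib, ← Finset.mul_sum, hwcol, mul_zero, add_zero]
      obtain ⟨q, hq1, hq2, hq3, hq4, hq5⟩ :=
        ih _ hlt q₀ hq₀nonneg rfl
      refine ⟨q, hq1, ?_, ?_, ?_, hq5⟩
      · intro x hx
        have := hq₀supp x (hq2 x hx)
        rw [hSdef, Finset.mem_filter] at this
        exact this.2
      · intro u; rw [hq3 u, hq₀row u]
      · intro v; rw [hq4 v, hq₀col v]

lemma counting {U V : Type} [Fintype U] [Fintype V] [DecidableEq U] [DecidableEq V]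
    (S : Finset (U × V)) :
    (Finset.univ.filter fun v : V => 1 < (S.filter fun x => x.2 = v).card).card
      + (S.image Prod.snd).card ≤ S.card := by
  classical
  set Vp := S.image Prod.snd with hVp
  set NC := Finset.univ.filter fun v : V => 1 < (S.filter fun x => x.2 = v).card with hNC
  have hfib : S.card = ∑ v ∈ Vp, (S.filter fun x => x.2 = v).card :=
    Finset.card_eq_sum_card_fiberwise fun x hx => Finset.mem_image.2 ⟨x, hx, rfl⟩
  have hNCsub : NC ⊆ Vp := by
    intro v hv
    rw [hNC, Finset.mem_filter] at hv
    have : (S.filter fun x => x.2 = v).Nonempty := Finset.card_pos.1 (by omega)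
    obtain ⟨x, hx⟩ := this
    rw [Finset.mem_filter] at hx
    exact hx.2 ▸ Finset.mem_image.2 ⟨x, hx.1, rfl⟩
  have hNCcard : NC.card = ∑ v ∈ Vp, if 1 < (S.filter fun x => x.2 = v).card then 1 else 0 := by
    rw [← Finset.card_filter]
    congr 1
    ext v
    simp only [Finset.mem_filter, hNC]
    constructor
    · rintro ⟨-, h⟩; exact ⟨hNCsub (by simp [hNC, h]), h⟩
    · rintro ⟨-, h⟩; exact ⟨Finset.mem_univ v, h⟩
  have hterm : ∀ v ∈ Vp,
      (if 1 < (S.filter fun x => x.2 = v).card then 1 else 0) + 1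
        ≤ (S.filter fun x => x.2 = v).card := by
    intro v hv
    obtain ⟨x, hx, hxv⟩ := Finset.mem_image.1 hv
    have h1 : 0 < (S.filter fun x => x.2 = v).card :=
      Finset.card_pos.2 ⟨x, Finset.mem_filter.2 ⟨hx, hxv⟩⟩
    split <;> omega
  calc NC.card + Vp.card
      = ∑ v ∈ Vp, ((if 1 < (S.filter fun x => x.2 = v).card then 1 else 0) + 1) := by
        rw [Finset.sum_add_distrib, ← hNCcard, Finset.sum_const, smul_eq_mul, mul_one]
    _ ≤ ∑ v ∈ Vp, (S.filter fun x => x.2 = v).card := Finset.sum_le_sum hterm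
    _ = S.card := hfib.symm

lemma measure_eq_sum' {α : Type} [Fintype α] [MeasurableSpace α] [MeasurableSingletonClass α]
    (μ : Measure α) (A : Set α) :
    μ A = ∑ x ∈ A.toFinite.toFinset, μ {x} := by
  conv_lhs => rw [show A = ⋃ x ∈ A.toFinite.toFinset, ({x} : Set α) by ext y; simp]
  exact measure_biUnion_finset
    (fun x _ y _ hxy => by simpa [Set.disjoint_singleton] using hxy)
    (fun x _ => measurableSet_singleton x)

/-- Keane–Smorodinsky marriage lemma. Given a coupling `λ` of `ρ` and `σ`
on finite sets `U × V`, there is a coupling `λ̃` of `ρ` and `σ`, absolutely continuous with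
respect to `λ`, such that at most `|U| - 1` elements of `V` are not `λ̃`-committed. -/
theorem exists_coupling_committed
    {U V : Type} [Fintype U] [Fintype V]
    [MeasurableSpace U] [MeasurableSingletonClass U]
    [MeasurableSpace V] [MeasurableSingletonClass V]
    (ρ : Measure U) (σ : Measure V) [IsProbabilityMeasure ρ] [IsProbabilityMeasure σ]
    (lam : Measure (U × V)) [IsProbabilityMeasure lam]
    (hfst : lam.map Prod.fst = ρ) (hsnd : lam.map Prod.snd = σ) :
    ∃ lam' : Measure (U × V), IsProbabilityMeasure lam' ∧
      lam'.map Prod.fst = ρ ∧ lam'.map Prod.snd = σ ∧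
      lam' ≪ lam ∧
      Set.ncard {v : V | ¬ Committed lam' v} ≤ Fintype.card U - 1 := by
  classical
  have hU : Nonempty U := by
    by_contra h
    rw [not_nonempty_iff] at h
    have h1 : (Set.univ : Set U) = ∅ := Set.univ_eq_empty_iff.2 h
    have h2 := measure_univ (μ := ρ)
    rw [h1, measure_empty] at h2
    simp at h2
  have hmeasU : ∀ A : Set U, MeasurableSet A := fun A => (Set.to_countable A).measurableSet
  have hmeasV : ∀ A : Set V, MeasurableSet A := fun A => (Set.to_countable A).measurableSet
  set p : U × V → ℝ := fun x => (lam {x}).toReal with hpdef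
  have hp : ∀ x, 0 ≤ p x := fun x => ENNReal.toReal_nonneg
  obtain ⟨q, hq0, hqsupp, hqrow, hqcol, hqcard⟩ := exists_min_support hU p hp
  have hrow : ∀ u, ∑ v, p (u, v) = (ρ {u}).toReal := by
    intro u
    have h1 : ρ {u} = lam (Prod.fst ⁻¹' {u}) := by
      rw [← hfst, Measure.map_apply measurable_fst (hmeasU {u})]
    have h2 : lam (Prod.fst ⁻¹' {u}) = ∑ v, lam {(u, v)} := by
      rw [measure_eq_sum' lam]
      rw [Finset.sum_congr (show (Prod.fst ⁻¹' {u} : Set (U × V)).toFinite.toFinset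
        = {u} ×ˢ Finset.univ by ext x; simp [Prod.ext_iff, eq_comm]) (fun _ _ => rfl)]
      rw [Finset.sum_product, Finset.sum_singleton]
    rw [hpdef]
    simp only
    rw [h1, h2, ENNReal.toReal_sum fun v _ => measure_ne_top lam _]
  have hcol : ∀ v, ∑ u, p (u, v) = (σ {v}).toReal := by
    intro v
    have h1 : σ {v} = lam (Prod.snd ⁻¹' {v}) := by
      rw [← hsnd, Measure.map_apply measurable_snd (hmeasV {v})]
    have h2 : lam (Prod.snd ⁻¹' {v}) = ∑ u, lam {(u, v)} := by
      rw [measure_eq_sum' lam]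
      rw [Finset.sum_congr (show (Prod.snd ⁻¹' {v} : Set (U × V)).toFinite.toFinset
        = Finset.univ ×ˢ {v} by ext x; simp [Prod.ext_iff, eq_comm]) (fun _ _ => rfl)]
      rw [Finset.sum_product_right, Finset.sum_singleton]
    rw [hpdef]
    simp only
    rw [h1, h2, ENNReal.toReal_sum fun u _ => measure_ne_top lam _]
  set lam' : Measure (U × V) :=
    (Finset.univ : Finset (U × V)).sum (fun x => ENNReal.ofReal (q x) • Measure.dirac x)
    with hlam'def
  have happly : ∀ A : Set (U × V),
      lam' A = ∑ x ∈ A.toFinite.toFinset, ENNReal.ofReal (q x) := by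
    intro A
    rw [hlam'def, Measure.finset_sum_apply]
    rw [show (∑ x ∈ A.toFinite.toFinset, ENNReal.ofReal (q x))
        = ∑ x : U × V, if x ∈ A then ENNReal.ofReal (q x) else 0 by
      rw [Finset.sum_congr (show A.toFinite.toFinset
          = Finset.univ.filter (· ∈ A) by ext x; simp) (fun _ _ => rfl)]
      rw [Finset.sum_filter]]
    refine Finset.sum_congr rfl fun x _ => ?_
    rw [Measure.smul_apply, Measure.dirac_apply, smul_eq_mul]
    by_cases h : x ∈ A <;> simp [Set.indicator_apply, h]
  have hsingle : ∀ x : U × V, lam' {x} = ENNReal.ofReal (q x) := by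
    intro x
    rw [happly]
    rw [Finset.sum_congr (show (({x} : Set (U × V))).toFinite.toFinset = {x} by ext y; simp [Set.Finite.mem_toFinset])
      (fun _ _ => rfl), Finset.sum_singleton]
  have hmapfst : lam'.map Prod.fst = ρ := by
    ext A hA
    rw [Measure.map_apply measurable_fst hA, happly]
    rw [Finset.sum_congr (show (Prod.fst ⁻¹' A : Set (U × V)).toFinite.toFinset
      = A.toFinite.toFinset ×ˢ Finset.univ by ext x; simp) (fun _ _ => rfl)]
    rw [Finset.sum_product, measure_eq_sum' ρ]
    refine Finset.sum_congr rfl fun u _ => ?_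
    rw [← ENNReal.ofReal_sum_of_nonneg fun v _ => hq0 (u, v)]
    rw [hqrow u, hrow u, ENNReal.ofReal_toReal (measure_ne_top ρ _)]
  have hmapsnd : lam'.map Prod.snd = σ := by
    ext A hA
    rw [Measure.map_apply measurable_snd hA, happly]
    rw [Finset.sum_congr (show (Prod.snd ⁻¹' A : Set (U × V)).toFinite.toFinset
      = Finset.univ ×ˢ A.toFinite.toFinset by ext x; simp) (fun _ _ => rfl)]
    rw [Finset.sum_product_right, measure_eq_sum' σ]
    refine Finset.sum_congr rfl fun v _ => ?_
    rw [← ENNReal.ofReal_sum_of_nonneg fun u _ => hq0 (u, v)]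
    rw [hqcol v, hcol v, ENNReal.ofReal_toReal (measure_ne_top σ _)]
  have hprob : IsProbabilityMeasure lam' := by
    constructor
    have h3 : lam' Set.univ = (lam'.map Prod.fst) Set.univ := by
      rw [Measure.map_apply measurable_fst MeasurableSet.univ, Set.preimage_univ]
    rw [h3, hmapfst, measure_univ]
  have hac : lam' ≪ lam := by
    refine Measure.AbsolutelyContinuous.mk fun A _ hA0 => ?_
    rw [happly]
    apply Finset.sum_eq_zero
    intro x hx
    rw [Set.Finite.mem_toFinset] at hx
    have h1 : lam {x} = 0 := measure_mono_null (Set.singleton_subset_iff.2 hx) hA0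
    have h2 : q x = 0 := by
      by_contra h
      exact hqsupp x h (by rw [hpdef]; simp [h1])
    rw [h2]; simp
  refine ⟨lam', hprob, hmapfst, hmapsnd, hac, ?_⟩
  set S : Finset (U × V) := Finset.univ.filter fun x => q x ≠ 0 with hSdef
  have hcommit : ∀ v : V, ¬ Committed lam' v ↔ 1 < (S.filter fun x => x.2 = v).card := by
    intro v
    have hset : {u : U | lam' {(u, v)} ≠ 0} = {u : U | q (u, v) ≠ 0} := by
      ext u
      rw [Set.mem_setOf_eq, Set.mem_setOf_eq, hsingle]
      rw [ne_eq, ENNReal.ofReal_eq_zero, not_le]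
      exact ⟨fun h => ne_of_gt h, fun h => lt_of_le_of_ne (hq0 _) (Ne.symm h)⟩
    have hfib : (S.filter fun x => x.2 = v)
        = (Finset.univ.filter fun u => q (u, v) ≠ 0).image (fun u => (u, v)) := by
      ext ⟨a, b⟩
      simp only [hSdef, Finset.mem_filter, Finset.mem_image, Finset.filter_filter,
        Finset.mem_univ, true_and]
      constructor
      · rintro ⟨hq, rfl⟩; exact ⟨a, hq, rfl⟩
      · rintro ⟨u, hq, heq⟩
        injection heq with h1 h2
        subst h1; subst h2
        exact ⟨hq, rfl⟩
    have hcard : (S.filter fun x => x.2 = v).card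
        = (Finset.univ.filter fun u => q (u, v) ≠ 0).card := by
      rw [hfib]
      exact Finset.card_image_of_injective _ (fun a b h => by injection h)
    rw [show Committed lam' v ↔ ({u : U | q (u, v) ≠ 0}).Subsingleton by
      unfold Committed; rw [hset]]
    rw [← Set.not_nontrivial_iff, not_not, hcard, Finset.one_lt_card]
    simp [Set.Nontrivial]
  have hsetEq : {v : V | ¬ Committed lam' v}
      = ↑(Finset.univ.filter fun v : V => 1 < (S.filter fun x => x.2 = v).card) := by
    ext v
    simp [hcommit v]
  rw [hsetEq, Set.ncard_coe_finset]
  have hcount := counting S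
  have hU1 : 1 ≤ Fintype.card U := Fintype.card_pos_iff.2 hU
  omega

end Marriage
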